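/- arXiv:math/0109042 — 2 statements merged into one kernel-verified Lean document; each statement's English description precedes it below -/
import Mathlib

section
/- The set K = {[[u,0],[0,1]] : u ∈ ℂ, |u| = 1} is a compact subgroup of Aff(ℂ), and every compact subgroup of Aff(ℂ) is conjugate (by an element of Aff(ℂ)) to a subgroup of K; thus K, which is topologically isomorphic to the circle group S¹, is a maximal compact subgroup of Aff(ℂ). -/
/-- `Aff(ℂ)`: the group of affine transformations of the complex line,
realized as the matrices `[[a, b], [0, 1]]` with `a ≠ 0`. -/
def AffC : Set (Matrix (Fin 2) (Fin 2) ℂ) :=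
  {M | ∃ a b : ℂ, a ≠ 0 ∧ M = !![a, b; 0, 1]}

/-- The circle subgroup `K = {[[u,0],[0,1]] : |u| = 1}` of `Aff(ℂ)`. -/
def circleK : Set (Matrix (Fin 2) (Fin 2) ℂ) :=
  {M | ∃ u : ℂ, ‖u‖ = 1 ∧ M = !![u, 0; 0, 1]}

private lemma aff_mul (a b c d : ℂ) :
    !![a,b;(0:ℂ),1] * !![c,d;0,1] = !![a*c, a*d+b; 0,1] := by
  rw [Matrix.mul_fin_two]; ring_nf

private lemma aff_eq {x y x' y' : ℂ} (h : !![x,y;(0:ℂ),1] = !![x',y';0,1]) :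
    x = x' ∧ y = y' := by
  constructor
  · have := congrFun (congrFun h 0) 0; simpa using this
  · have := congrFun (congrFun h 0) 1; simpa using this

/-- `circleK` is a compact subgroup of `Aff(ℂ)`, and every compact subgroup of
`Aff(ℂ)` is conjugate (by an element of `Aff(ℂ)`) to a subgroup of `circleK`;
thus `circleK ≅ S¹` is a maximal compact subgroup of `Aff(ℂ)`. -/
theorem stmt2 :
    (circleK ⊆ AffC ∧ (1 : Matrix (Fin 2) (Fin 2) ℂ) ∈ circleK ∧
      (∀ M ∈ circleK, ∀ N ∈ circleK, M * N ∈ circleK) ∧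
      (∀ M ∈ circleK, ∃ N ∈ circleK, M * N = 1 ∧ N * M = 1) ∧
      IsCompact circleK) ∧
    (∀ H : Set (Matrix (Fin 2) (Fin 2) ℂ), H ⊆ AffC →
      (1 : Matrix (Fin 2) (Fin 2) ℂ) ∈ H →
      (∀ M ∈ H, ∀ N ∈ H, M * N ∈ H) →
      (∀ M ∈ H, ∃ N ∈ H, M * N = 1 ∧ N * M = 1) →
      IsCompact H →
      ∃ g ∈ AffC, ∀ M ∈ H, g * M * g⁻¹ ∈ circleK) := by
  have one2 : (1 : Matrix (Fin 2) (Fin 2) ℂ) = !![1,0;0,1] := Matrix.one_fin_two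
  constructor
  · refine ⟨?_, ?_, ?_, ?_, ?_⟩
    · rintro M ⟨u, hu, rfl⟩
      refine ⟨u, 0, fun h => by simp [h] at hu, rfl⟩
    · exact ⟨1, by simp, one2⟩
    · rintro M ⟨u, hu, rfl⟩ N ⟨v, hv, rfl⟩
      exact ⟨u * v, by simp [map_mul, hu, hv], by rw [aff_mul]; ring_nf⟩
    · rintro M ⟨u, hu, rfl⟩
      have hu0 : u ≠ 0 := fun h => by simp [h] at hu
      refine ⟨!![u⁻¹, 0; 0, 1], ⟨u⁻¹, by simp [map_inv₀, hu], rfl⟩, ?_, ?_⟩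
      · rw [aff_mul, one2, mul_inv_cancel₀ hu0]; ring_nf
      · rw [aff_mul, one2, inv_mul_cancel₀ hu0]; ring_nf
    · have h1 : IsCompact (Metric.sphere (0:ℂ) 1) := isCompact_sphere 0 1
      have hc : Continuous fun u : ℂ => (u • !![(1:ℂ),0;0,0] + !![0,0;0,(1:ℂ)]) :=
        (continuous_id.smul continuous_const).add continuous_const
      have heq : ∀ u : ℂ, u • !![(1:ℂ),0;0,0] + !![0,0;0,(1:ℂ)] = !![u,0;0,1] := by
        intro u; ext i j; fin_cases i <;> fin_cases j <;> simp
      have himg := h1.image hc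
      convert himg using 1
      ext M
      simp only [circleK, Set.mem_image, Set.mem_setOf_eq, Metric.mem_sphere,
        dist_zero_right]
      constructor
      · rintro ⟨u, hu, rfl⟩; exact ⟨u, hu, heq u⟩
      · rintro ⟨u, hu, rfl⟩; exact ⟨u, hu, heq u⟩
  · intro H hsub h1 hmul hinv hcpt
    -- canonical form of elements of H
    have hrep : ∀ M ∈ H, M 0 0 ≠ 0 ∧ M = !![M 0 0, M 0 1; 0, 1] := by
      intro M hM
      obtain ⟨a, b, ha, rfl⟩ := hsub hM
      simpa using ha
    -- bound on entries
    obtain ⟨C, hC⟩ : ∃ C : ℝ, ∀ M ∈ H, ‖M 0 0‖ ≤ C ∧ ‖M 0 1‖ ≤ C := by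
      have hf : Continuous fun M : Matrix (Fin 2) (Fin 2) ℂ =>
          max (‖M 0 0‖) (‖M 0 1‖) := by
        apply Continuous.max
        · exact continuous_norm.comp
            ((continuous_apply (0:Fin 2)).comp (continuous_apply (0:Fin 2)))
        · exact continuous_norm.comp
            ((continuous_apply (1:Fin 2)).comp (continuous_apply (0:Fin 2)))
      obtain ⟨C, hCub⟩ := (hcpt.image hf).bddAbove
      refine ⟨C, fun M hM => ?_⟩
      have : max (‖M 0 0‖) (‖M 0 1‖) ≤ C := hCub ⟨M, hM, rfl⟩
      exact ⟨le_trans (le_max_left _ _) this, le_trans (le_max_right _ _) this⟩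
    -- powers
    have hpow : ∀ M ∈ H, ∀ n : ℕ, ∃ P ∈ H,
        P 0 0 = (M 0 0) ^ n ∧ (M 0 0 = 1 → P 0 1 = (n : ℂ) * M 0 1) := by
      intro M hM n
      induction n with
      | zero => exact ⟨1, h1, by simp [one2], by simp [one2]⟩
      | succ n ih =>
        obtain ⟨P, hP, hP0, hP1⟩ := ih
        refine ⟨P * M, hmul P hP M hM, ?_, ?_⟩
        · rw [(hrep P hP).2, (hrep M hM).2, aff_mul]
          simp [hP0, pow_succ]
        · intro ha1
          rw [(hrep P hP).2, (hrep M hM).2, aff_mul]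
          simp only [hP0, hP1 ha1, ha1]
          push_cast
          simp
          ring
    -- |a| ≤ 1 for all elements
    have habs_le : ∀ M ∈ H, ‖M 0 0‖ ≤ 1 := by
      intro M hM
      by_contra hlt
      push_neg at hlt
      obtain ⟨n, hn⟩ := pow_unbounded_of_one_lt C hlt
      obtain ⟨P, hP, hP0, -⟩ := hpow M hM n
      have : ‖P 0 0‖ ≤ C := (hC P hP).1
      rw [hP0, norm_pow] at this
      linarith
    -- |a| = 1
    have habs : ∀ M ∈ H, ‖M 0 0‖ = 1 := by
      intro M hM
      obtain ⟨N, hN, hMN, -⟩ := hinv M hM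
      have hprod : M 0 0 * N 0 0 = 1 := by
        have := hMN
        rw [(hrep M hM).2, (hrep N hN).2, aff_mul, one2] at this
        exact (aff_eq this).1
      have h2 : ‖M 0 0‖ * ‖N 0 0‖ = 1 := by
        rw [← norm_mul, hprod, norm_one]
      have hMle := habs_le M hM
      have hNle := habs_le N hN
      have hMpos : 0 < ‖M 0 0‖ :=
        norm_pos_iff.mpr (hrep M hM).1
      nlinarith
    -- a = 1 → b = 0
    have hb0 : ∀ M ∈ H, M 0 0 = 1 → M 0 1 = 0 := by
      intro M hM ha1
      by_contra hb
      obtain ⟨n, hn⟩ := exists_nat_gt (C / ‖M 0 1‖)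
      obtain ⟨P, hP, -, hP1⟩ := hpow M hM n
      have hbpos : 0 < ‖M 0 1‖ := norm_pos_iff.mpr hb
      have h3 : ‖P 0 1‖ ≤ C := (hC P hP).2
      rw [hP1 ha1, norm_mul] at h3
      simp only [Complex.norm_natCast] at h3
      rw [div_lt_iff₀ hbpos] at hn
      linarith
    -- the key commutator relation
    have hkey : ∀ M ∈ H, ∀ N ∈ H,
        M 0 0 * N 0 1 + M 0 1 = N 0 0 * M 0 1 + N 0 1 := by
      intro M hM N hN
      set a := M 0 0; set b := M 0 1; set c := N 0 0; set d := N 0 1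
      have hQ : N * M ∈ H := hmul N hN M hM
      obtain ⟨Q', hQ', hQQ', -⟩ := hinv (N * M) hQ
      set e := Q' 0 0; set f := Q' 0 1
      have hNM : N * M = !![c*a, c*b+d; 0, 1] := by
        rw [(hrep N hN).2, (hrep M hM).2, aff_mul]
      have hmul1 : (N * M) * Q' = !![c*a*e, c*a*f + (c*b+d); 0, 1] := by
        rw [hNM, (hrep Q' hQ').2, aff_mul]
      have hinv_eq : c*a*e = 1 ∧ c*a*f + (c*b+d) = 0 := by
        have := hQQ'
        rw [hmul1, one2] at this
        exact aff_eq this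
      -- R = (M*N)*Q'
      have hR : (M * N) * Q' ∈ H := hmul (M * N) (hmul M hM N hN) Q' hQ'
      have hRform : (M * N) * Q' = !![a*c*e, a*c*f + (a*d+b); 0, 1] := by
        rw [(hrep M hM).2, (hrep N hN).2, aff_mul, (hrep Q' hQ').2, aff_mul]
      have hR00 : ((M * N) * Q') 0 0 = 1 := by
        rw [hRform]
        simp only [Matrix.cons_val', Matrix.cons_val_zero, Matrix.empty_val',
          Matrix.cons_val_fin_one, Matrix.cons_val_one, Matrix.head_cons, Matrix.of_apply]
        rw [show a*c*e = c*a*e by ring, hinv_eq.1]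
      have hR01 : ((M * N) * Q') 0 1 = 0 := hb0 _ hR hR00
      rw [hRform] at hR01
      simp only [Matrix.cons_val', Matrix.cons_val_zero, Matrix.empty_val',
        Matrix.cons_val_fin_one, Matrix.cons_val_one, Matrix.head_cons, Matrix.of_apply] at hR01
      have hcf : c*a*f = -(c*b+d) := by linear_combination hinv_eq.2
      have : a*c*f = -(c*b+d) := by rw [show a*c*f = c*a*f by ring, hcf]
      linear_combination hR01 - this
    -- find common fixed point z
    obtain ⟨z, hz⟩ : ∃ z : ℂ, ∀ M ∈ H, M 0 1 = z * (1 - M 0 0) := by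
      by_cases hex : ∃ M₀ ∈ H, M₀ 0 0 ≠ 1
      · obtain ⟨M₀, hM₀, ha₀⟩ := hex
        refine ⟨M₀ 0 1 / (1 - M₀ 0 0), fun M hM => ?_⟩
        have hrel := hkey M hM M₀ hM₀
        have h10 : (1 : ℂ) - M₀ 0 0 ≠ 0 := sub_ne_zero.mpr (Ne.symm ha₀)
        field_simp
        linear_combination hrel
      · push_neg at hex
        refine ⟨0, fun M hM => ?_⟩
        rw [hb0 M hM (hex M hM)]
        ring
    -- conjugating element
    refine ⟨!![1, -z; 0, 1], ⟨1, -z, one_ne_zero, rfl⟩, ?_⟩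
    intro M hM
    have hginv : (!![1, -z; (0:ℂ), 1])⁻¹ = !![1, z; 0, 1] := by
      apply Matrix.inv_eq_right_inv
      rw [aff_mul, one2]; ring_nf
    rw [hginv, (hrep M hM).2, aff_mul, aff_mul]
    refine ⟨M 0 0, habs M hM, ?_⟩
    rw [hz M hM]
    congr 1 <;> ring
end

section
/- The coadjoint orbit of the functional F₍₀,₁₎ under Aff(ℂ) is exactly the set of functionals with nonzero second parameter: { K(g)F₍₀,₁₎ : g ∈ Aff(ℂ) } = { F₍u,v₎ : u ∈ ℂ, v ∈ ℂ, v ≠ 0 }. Explicitly, for g = [[a,b],[0,1]] with a ≠ 0 one has K(g)F₍₀,₁₎ = F₍b/a, 1/a₎, and every pair (u,v) with v ≠ 0 arises this way; thus the open set of such functionals is a single 4-dimensional coadjoint orbit, diffeomorphic to ℂ × ℂ*. -/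
/-- The element `[[a, b], [0, 1]]` of `Aff(ℂ)`. -/
def affC (a b : ℂ) : Matrix (Fin 2) (Fin 2) ℂ := !![a, b; 0, 1]

/-- The element `[[α, β], [0, 0]]` of the Lie algebra `aff(ℂ)`. -/
def affLieC (α β : ℂ) : Matrix (Fin 2) (Fin 2) ℂ := !![α, β; 0, 0]

/-- The real-linear functional `F₍u,v₎` on `aff(ℂ)`,
`F₍u,v₎([[α,β],[0,0]]) = Re(uα + vβ)`, evaluated on a matrix via its
`(0,0)` and `(0,1)` entries. -/
def FfunC (u v : ℂ) (M : Matrix (Fin 2) (Fin 2) ℂ) : ℝ := (u * M 0 0 + v * M 0 1).re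

lemma affC_inv (a b : ℂ) (ha : a ≠ 0) : (affC a b)⁻¹ = affC a⁻¹ (-b/a) := by
  apply Matrix.inv_eq_right_inv
  unfold affC
  ext i j
  fin_cases i <;> fin_cases j <;>
    simp [Matrix.mul_apply, Fin.sum_univ_two, mul_comm, ha, div_eq_mul_inv] <;>
    field_simp <;> ring

lemma key (a b : ℂ) (ha : a ≠ 0) (α β : ℂ) :
    FfunC 0 1 ((affC a b)⁻¹ * affLieC α β * affC a b)
      = FfunC (b / a) (1 / a) (affLieC α β) := by
  rw [affC_inv a b ha]
  unfold affC affLieC FfunC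
  simp [Matrix.mul_apply, Fin.sum_univ_two, Complex.mul_re, Complex.inv_re, Complex.inv_im,
    Complex.div_re, Complex.div_im]
  ring

/-- The coadjoint orbit of `F₍₀,₁₎` under `Aff(ℂ)` is `{F₍u,v₎ : v ≠ 0}`:
`K(g)F₍₀,₁₎ = F₍b/a, 1/a₎` for `g = [[a,b],[0,1]]`, `a ≠ 0`, and the set of
parameters `(u, v)` so obtained is exactly `{(u, v) : v ≠ 0}`, a single
4-dimensional coadjoint orbit diffeomorphic to `ℂ × ℂ*`. -/
theorem stmt10 :
    (∀ a b : ℂ, a ≠ 0 → ∀ α β : ℂ,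
        FfunC 0 1 ((affC a b)⁻¹ * affLieC α β * affC a b)
          = FfunC (b / a) (1 / a) (affLieC α β)) ∧
    ({q : ℂ × ℂ | ∃ a b : ℂ, a ≠ 0 ∧ ∀ α β : ℂ,
        FfunC 0 1 ((affC a b)⁻¹ * affLieC α β * affC a b)
          = FfunC q.1 q.2 (affLieC α β)}
      = {q : ℂ × ℂ | q.2 ≠ 0}) := by
  refine ⟨key, ?_⟩
  ext ⟨u, v⟩
  simp only [Set.mem_setOf_eq]
  constructor
  · rintro ⟨a, b, ha, h⟩
    intro hv
    have h1 := (h 0 a).symm.trans (key a b ha 0 a)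
    unfold FfunC affLieC at h1
    simp [hv, ha, div_eq_mul_inv] at h1
  · intro hv
    refine ⟨1/v, u/v, by simp [hv], fun α β => ?_⟩
    rw [key _ _ (by simp [hv])]
    congr 1 <;> field_simp
end
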